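/- arXiv:0901.1283 — 2 statements merged into one kernel-verified Lean document; each statement's English description precedes it below -/
import Mathlib

section
/- Consider the Nicholson's blowflies equation with distributed delay under hypotheses (a2), (a4), (a5). If δ < p < δ·e², then every solution x with positive initial condition satisfies lim_{t→∞} x(t) = K, where K = (1/a)·ln(p/δ) is the positive equilibrium. -/
open MeasureTheory Filter Set Topology

/-- Padé-type inequality: `(2-D)e^D < 2+D` for `D > 0`. -/
lemma nich_pade {D : ℝ} (hD : 0 < D) : (2 - D) * Real.exp D < 2 + D := by
  have key : ∀ s : ℝ, 0 < s → 0 < (2 + s) * Real.exp (-s) - (2 - s) := by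
    have hF : ∀ s : ℝ, HasDerivAt (fun s : ℝ => (2 + s) * Real.exp (-s) - (2 - s))
        (1 - (1 + s) * Real.exp (-s)) s := by
      intro s
      have h1 : HasDerivAt (fun s : ℝ => -s) (-1) s := (hasDerivAt_id s).neg
      have h2 : HasDerivAt (fun s : ℝ => Real.exp (-s)) (Real.exp (-s) * (-1)) s := h1.exp
      have h3 : HasDerivAt (fun s : ℝ => 2 + s) 1 s := (hasDerivAt_id s).const_add 2
      have h4 : HasDerivAt (fun s : ℝ => 2 - s) (-1) s := (hasDerivAt_id s).const_sub 2
      have := (h3.mul h2).sub h4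
      exact this.congr_deriv (by ring)
    have hmono : StrictMonoOn (fun s : ℝ => (2 + s) * Real.exp (-s) - (2 - s)) (Ici 0) := by
      apply strictMonoOn_of_deriv_pos (convex_Ici 0)
      · exact (Continuous.continuousOn (by continuity))
      · intro s hs
        rw [interior_Ici] at hs
        rw [(hF s).deriv]
        have hlt : s + 1 < Real.exp s := Real.add_one_lt_exp (ne_of_gt hs)
        have hes : (0:ℝ) < Real.exp s := Real.exp_pos s
        rw [Real.exp_neg, sub_pos, mul_inv_lt_iff₀ hes, one_mul]
        linarith
    intro s hs
    have := hmono (le_refl (0:ℝ)) (le_of_lt hs) hs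
    simpa using this
  have h := key D hD
  have he : (0:ℝ) < Real.exp D := Real.exp_pos D
  have he2 : Real.exp (-D) = (Real.exp D)⁻¹ := Real.exp_neg D
  rw [he2] at h
  have h2 : (2 - D) < (2 + D) * (Real.exp D)⁻¹ := by linarith
  calc (2 - D) * Real.exp D < ((2 + D) * (Real.exp D)⁻¹) * Real.exp D :=
        mul_lt_mul_of_pos_right h2 he
    _ = 2 + D := by field_simp

/-- Key inequality: `(K-D)e^D < K+D` for `0 < D < K < 2`. -/
lemma nich_key {K D : ℝ} (hD : 0 < D) (hDK : D < K) (hK2 : K < 2) :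
    (K - D) * Real.exp D < K + D := by
  have h1 : (2 - D) * Real.exp D < 2 + D := nich_pade hD
  have h2 : (1:ℝ) < Real.exp D := by
    have := Real.add_one_lt_exp (ne_of_gt hD); linarith
  nlinarith [Real.exp_pos D]

/-- No nontrivial "2-cycle-like" pair for the Ricker map when `log c < 2`. -/
lemma nich_pair {c u v : ℝ} (hc : 1 < c) (hK2 : Real.log c < 2)
    (hu0 : 0 < u) (huK : u ≤ Real.log c) (hKv : Real.log c ≤ v)
    (h1 : v ≤ c * (u * Real.exp (-u))) (h2 : c * (v * Real.exp (-v)) ≤ u) :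
    u = Real.log c ∧ v = Real.log c := by
  set K := Real.log c with hK
  have hc0 : (0:ℝ) < c := lt_trans one_pos hc
  have hK0 : 0 < K := Real.log_pos hc
  have hv0 : 0 < v := lt_of_lt_of_le hK0 hKv
  have hlog1 : Real.log v ≤ K + Real.log u - u := by
    have := Real.log_le_log (by positivity) h1
    calc Real.log v ≤ Real.log (c * (u * Real.exp (-u))) := this
      _ = K + Real.log u - u := by
          rw [Real.log_mul (ne_of_gt hc0) (by positivity), Real.log_mul (ne_of_gt hu0)
            (ne_of_gt (Real.exp_pos _)), Real.log_exp]; ring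
  have hlog2 : K + Real.log v - v ≤ Real.log u := by
    have := Real.log_le_log (by positivity) h2
    calc K + Real.log v - v
        = Real.log (c * (v * Real.exp (-v))) := by
          rw [Real.log_mul (ne_of_gt hc0) (by positivity), Real.log_mul (ne_of_gt hv0)
            (ne_of_gt (Real.exp_pos _)), Real.log_exp]; ring
      _ ≤ Real.log u := this
  set D := Real.log v - Real.log u with hDdef
  have hD0 : 0 ≤ D := by
    have huv : u ≤ v := le_trans huK hKv
    have := Real.log_le_log hu0 huv
    simp only [hDdef]; linarith
  rcases eq_or_lt_of_le hD0 with hD | hD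
  · -- D = 0 : u = v
    have huv : u = v := by
      have : Real.log u = Real.log v := by simp only [hDdef] at hD; linarith
      exact Real.log_injOn_pos (mem_Ioi.mpr hu0) (mem_Ioi.mpr hv0) this
    constructor
    · exact le_antisymm huK (huv ▸ hKv)
    · exact le_antisymm (huv ▸ huK) hKv
  · -- D > 0 : contradiction
    exfalso
    have hA : u + D ≤ K := by simp only [hDdef]; linarith
    have hB : K + D ≤ v := by simp only [hDdef]; linarith
    have hDK : D < K := by linarith
    have hveq : v = u * Real.exp D := by
      have : Real.exp (Real.log v) = Real.exp (Real.log u + D) := by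
        simp only [hDdef]; ring_nf
      rw [Real.exp_log hv0, Real.exp_add, Real.exp_log hu0] at this
      exact this
    have hle : v ≤ (K - D) * Real.exp D := by
      rw [hveq]
      exact mul_le_mul_of_nonneg_right (by linarith) (le_of_lt (Real.exp_pos D))
    have := nich_key hD hDK hK2
    linarith

lemma nich_ricker_max {a y : ℝ} (ha : 0 < a) (hy : 0 ≤ y) :
    y * Real.exp (-(a * y)) ≤ (a * Real.exp 1)⁻¹ := by
  have h1 : a * y ≤ Real.exp (a * y - 1) := by
    have := Real.add_one_le_exp (a * y - 1); linarith
  have he : (0:ℝ) < Real.exp (-(a * y)) := Real.exp_pos _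
  have key : a * y * Real.exp (-(a * y)) ≤ Real.exp (-1 : ℝ) := by
    calc a * y * Real.exp (-(a * y)) ≤ Real.exp (a * y - 1) * Real.exp (-(a * y)) :=
          mul_le_mul_of_nonneg_right h1 he.le
      _ = Real.exp (-1 : ℝ) := by rw [← Real.exp_add]; ring_nf
  have key2 : a * (y * Real.exp (-(a * y))) ≤ (Real.exp 1)⁻¹ := by
    rw [← Real.exp_neg 1, ← mul_assoc]; exact key
  calc y * Real.exp (-(a * y)) = a⁻¹ * (a * (y * Real.exp (-(a * y)))) := by field_simp
    _ ≤ a⁻¹ * (Real.exp 1)⁻¹ := mul_le_mul_of_nonneg_left key2 (inv_nonneg.mpr ha.le)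
    _ = (a * Real.exp 1)⁻¹ := (mul_inv a (Real.exp 1)).symm

lemma nich_ricker_lb {a ε X y : ℝ} (ha : 0 < a) (hε : 0 < ε) (h1 : ε ≤ y) (h2 : y ≤ X) :
    min (ε * Real.exp (-(a * ε))) (X * Real.exp (-(a * X))) ≤ y * Real.exp (-(a * y)) := by
  set g : ℝ → ℝ := fun y => y * Real.exp (-(a * y)) with hg
  have hderiv : ∀ y : ℝ, HasDerivAt g (Real.exp (-(a * y)) * (1 - a * y)) y := by
    intro y
    have hd1 : HasDerivAt (fun y : ℝ => -(a * y)) (-a) y := by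
      exact ((hasDerivAt_id y).const_mul a).neg.congr_deriv (by ring)
    have hd2 : HasDerivAt (fun y : ℝ => Real.exp (-(a * y))) (Real.exp (-(a * y)) * (-a)) y :=
      hd1.exp
    have := (hasDerivAt_id y).mul hd2
    exact this.congr_deriv (by simp only [id_eq]; ring)
  have hcont : Continuous g := by
    apply Continuous.mul continuous_id
    exact Real.continuous_exp.comp (by continuity)
  have hdiff : Differentiable ℝ g := fun y => (hderiv y).differentiableAt
  have hmono : MonotoneOn g (Icc 0 a⁻¹) := by
    apply monotoneOn_of_deriv_nonneg (convex_Icc _ _) hcont.continuousOn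
      (hdiff.differentiableOn)
    intro y hy
    rw [interior_Icc, mem_Ioo] at hy
    rw [(hderiv y).deriv]
    have : a * y < 1 := by
      have := hy.2
      calc a * y < a * a⁻¹ := by exact mul_lt_mul_of_pos_left hy.2 ha
        _ = 1 := mul_inv_cancel₀ (ne_of_gt ha)
    have := Real.exp_pos (-(a * y))
    nlinarith
  have hanti : AntitoneOn g (Ici a⁻¹) := by
    apply antitoneOn_of_deriv_nonpos (convex_Ici _) hcont.continuousOn
      (hdiff.differentiableOn)
    intro y hy
    rw [interior_Ici, mem_Ioi] at hy
    rw [(hderiv y).deriv]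
    have : 1 < a * y := by
      calc (1:ℝ) = a * a⁻¹ := (mul_inv_cancel₀ (ne_of_gt ha)).symm
        _ < a * y := mul_lt_mul_of_pos_left hy ha
    have := Real.exp_pos (-(a * y))
    nlinarith
  by_cases hy : y ≤ a⁻¹
  · have hεa : ε ≤ a⁻¹ := le_trans h1 hy
    exact le_trans (min_le_left _ _)
      (hmono ⟨hε.le, hεa⟩ ⟨le_trans hε.le h1, hy⟩ h1)
  · push_neg at hy
    exact le_trans (min_le_right _ _)
      (hanti (mem_Ici.mpr hy.le) (mem_Ici.mpr (le_trans hy.le h2)) h2)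

/-- Variation-of-constants style upper fence: if `x t - x s = ∫ G` with
`G u ≤ -δ x u + β`, then `x b ≤ β/δ - (β/δ - x v) e^{-δ(b-v)}`. -/
lemma nich_voc_upper {x G : ℝ → ℝ} {δ β v b : ℝ} (hδ : 0 < δ)
    (hx : Continuous x)
    (hint : ∀ t1 t2 : ℝ, v ≤ t1 → t1 ≤ t2 → t2 ≤ b → IntervalIntegrable G volume t1 t2)
    (hsol : ∀ s t : ℝ, v ≤ s → s ≤ t → t ≤ b → x t - x s = ∫ u in s..t, G u)
    (hG : ∀ u : ℝ, v ≤ u → u ≤ b → G u ≤ -(δ * x u) + β)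
    (hb : v ≤ b) :
    x b ≤ β / δ - (β / δ - x v) * Real.exp (-(δ * (b - v))) := by
  have main : ∀ η : ℝ, 0 < η →
      x b ≤ (β + η) / δ - ((β + η) / δ - x v) * Real.exp (-(δ * (b - v))) := by
    intro η hη
    set A := (β + η) / δ with hA
    set B : ℝ → ℝ := fun t => A - (A - x v) * Real.exp (-(δ * (t - v))) with hB
    set B' : ℝ → ℝ := fun t => δ * (A - x v) * Real.exp (-(δ * (t - v))) with hB'
    have hBd : ∀ t : ℝ, HasDerivAt B (B' t) t := by
      intro t
      have hd1 : HasDerivAt (fun t : ℝ => -(δ * (t - v))) (-δ) t := by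
        exact (((hasDerivAt_id t).sub_const v).const_mul δ).neg.congr_deriv (by ring)
      have hd2 : HasDerivAt (fun t : ℝ => Real.exp (-(δ * (t - v))))
          (Real.exp (-(δ * (t - v))) * (-δ)) t := hd1.exp
      have := (hd2.const_mul (A - x v)).const_sub A
      exact this.congr_deriv (by simp only [hB']; ring)
    have hBtouch : ∀ t : ℝ, B' t = -(δ * B t) + (β + η) := by
      intro t
      simp only [hB', hB]
      have hδA : δ * A = β + η := by
        rw [hA]; field_simp
      calc δ * (A - x v) * Real.exp (-(δ * (t - v)))
          = -(δ * (A - (A - x v) * Real.exp (-(δ * (t - v))))) + δ * A := by ring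
        _ = -(δ * (A - (A - x v) * Real.exp (-(δ * (t - v))))) + (β + η) := by rw [hδA]
    have := image_le_of_liminf_slope_right_lt_deriv_boundary
      (f := x) (f' := fun t => -(δ * x t) + β) (a := v) (b := b)
      hx.continuousOn
      (by
        intro t ht r hr
        have hIoi : Ioi t ∈ 𝓝[>] t := self_mem_nhdsWithin
        -- the comparison integral function
        set ψ : ℝ → ℝ := fun z => ∫ u in t..z, (-(δ * x u) + β) with hψ
        have hcont : Continuous (fun u : ℝ => -(δ * x u) + β) := by continuity
        have hdψ : HasDerivAt ψ (-(δ * x t) + β) t := by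
          exact intervalIntegral.integral_hasDerivAt_right
            (hcont.intervalIntegrable _ _)
            (hcont.stronglyMeasurableAtFilter _ _)
            hcont.continuousAt
        have hslope : Tendsto (slope ψ t) (𝓝[>] t) (𝓝 (-(δ * x t) + β)) :=
          (hasDerivAt_iff_tendsto_slope.1 hdψ).mono_left
            (nhdsWithin_mono t (fun z hz => ne_of_gt hz))
        have hev : ∀ᶠ z in 𝓝[>] t, slope ψ t z < r := hslope.eventually_lt_const hr
        have hIoo : Ioo t b ∈ 𝓝[>] t := Ioo_mem_nhdsGT_of_mem ⟨le_refl t, ht.2⟩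
        refine ((hev.and hIoo).mono ?_).frequently
        rintro z ⟨hzr, hz⟩
        refine lt_of_le_of_lt ?_ hzr
        rw [slope_def_field, slope_def_field]
        have hzt : t < z := hz.1
        have hψt : ψ t = 0 := intervalIntegral.integral_same
        have hxz : x z - x t = ∫ u in t..z, G u := hsol t z ht.1 hzt.le hz.2.le
        have hmono : (∫ u in t..z, G u) ≤ ∫ u in t..z, (-(δ * x u) + β) :=
          intervalIntegral.integral_mono_on hzt.le (hint t z ht.1 hzt.le hz.2.le)
            (hcont.intervalIntegrable _ _)
            (fun u hu => hG u (le_trans ht.1 hu.1) (le_trans hu.2 hz.2.le))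
        rw [hψt, sub_zero]
        rw [div_le_div_iff_of_pos_right (by linarith : (0:ℝ) < z - t)]
        have : x z - x t ≤ ψ z := by rw [hxz]; exact hmono
        linarith
        )
      (by
        simp only [hB, sub_self, mul_zero, neg_zero, Real.exp_zero, mul_one]
        linarith)
      hBd
      (by
        intro t ht heq
        rw [hBtouch t, ← heq]
        have : -(δ * x t) + β < -(δ * x t) + (β + η) := by linarith
        simpa using this)
      ⟨hb, le_refl b⟩
    simpa [hB, hA] using this
  -- let η → 0⁺
  have hcont2 : Continuous (fun η : ℝ =>
      (β + η) / δ - ((β + η) / δ - x v) * Real.exp (-(δ * (b - v)))) := by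
    apply Continuous.sub
    · exact (continuous_const.add continuous_id).div_const δ
    · exact (((continuous_const.add continuous_id).div_const δ).sub continuous_const).mul
        continuous_const
  have hlim : Tendsto (fun η : ℝ =>
      (β + η) / δ - ((β + η) / δ - x v) * Real.exp (-(δ * (b - v)))) (𝓝[>] 0)
      (𝓝 (β / δ - (β / δ - x v) * Real.exp (-(δ * (b - v))))) := by
    have := (hcont2.tendsto 0).mono_left (nhdsWithin_le_nhds (s := Ioi (0:ℝ)))
    simpa using this
  refine ge_of_tendsto hlim ?_
  filter_upwards [self_mem_nhdsWithin] with η hη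
  exact main η hη

lemma nich_voc_lower {x G : ℝ → ℝ} {δ α v b : ℝ} (hδ : 0 < δ)
    (hx : Continuous x)
    (hint : ∀ t1 t2 : ℝ, v ≤ t1 → t1 ≤ t2 → t2 ≤ b → IntervalIntegrable G volume t1 t2)
    (hsol : ∀ s t : ℝ, v ≤ s → s ≤ t → t ≤ b → x t - x s = ∫ u in s..t, G u)
    (hG : ∀ u : ℝ, v ≤ u → u ≤ b → -(δ * x u) + α ≤ G u)
    (hb : v ≤ b) :
    α / δ - (α / δ - x v) * Real.exp (-(δ * (b - v))) ≤ x b := by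
  have := nich_voc_upper (x := fun t => -x t) (G := fun t => -G t) (δ := δ) (β := -α)
    (v := v) (b := b) hδ hx.neg
    (fun t1 t2 h1 h2 h3 => (hint t1 t2 h1 h2 h3).neg)
    (by
      intro s t h1 h2 h3
      rw [intervalIntegral.integral_neg, ← hsol s t h1 h2 h3]; ring)
    (by intro u hu hub; have := hG u hu hub; linarith)
    hb
  simp only [neg_div] at this
  linarith

set_option maxHeartbeats 2000000 in
theorem nicholson_global_stability
    (δ p a : ℝ) (hδ : 0 < δ) (hp : 0 < p) (ha : 0 < a)
    (h : ℝ → ℝ) (μ : ℝ → Measure ℝ) (φ : ℝ → ℝ)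
    (hh_meas : Measurable h)
    (hh_le : ∀ t : ℝ, 0 ≤ t → h t ≤ t)
    (hh_tend : Tendsto h atTop atTop)
    (hμ_prob : ∀ t : ℝ, 0 ≤ t → IsProbabilityMeasure (μ t))
    (hμ_supp : ∀ t : ℝ, 0 ≤ t → μ t (Icc (h t) t)ᶜ = 0)
    (hμ_meas : ∀ g : ℝ → ℝ, Measurable g → (∃ C : ℝ, ∀ y : ℝ, |g y| ≤ C) →
      Measurable (fun t => ∫ s, g s ∂(μ t)))
    (hφ_cont : ContinuousOn φ (Iic (0 : ℝ)))
    (hφ_bdd : ∃ C : ℝ, ∀ t : ℝ, t ≤ 0 → |φ t| ≤ C)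
    (hφ_nonneg : ∀ t : ℝ, t ≤ 0 → 0 ≤ φ t)
    (hφ_pos : 0 < φ 0)
    (x : ℝ → ℝ)
    (hx_cont : Continuous x)
    (hx_init : ∀ t : ℝ, t ≤ 0 → x t = φ t)
    (hx_sol : ∀ t : ℝ, 0 ≤ t →
      x t = φ 0 + ∫ u in (0:ℝ)..t,
        (-(δ * x u) + p * ∫ s, x s * Real.exp (-(a * x s)) ∂(μ u)))
    (hδp : δ < p) (hpe : p < δ * Real.exp 2) :
    Tendsto x atTop (nhds ((1 / a) * Real.log (p / δ))) := by
  classical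
  obtain ⟨C, hC⟩ := hφ_bdd
  have hx0 : x 0 = φ 0 := by
    have := hx_sol 0 le_rfl
    simpa [intervalIntegral.integral_same] using this
  set N : ℝ → ℝ := fun u => ∫ s, x s * Real.exp (-(a * x s)) ∂(μ u) with hNdef
  set G : ℝ → ℝ := fun u => -(δ * x u) + p * N u with hGdef
  have hxs : ∀ t : ℝ, 0 ≤ t → x t = φ 0 + ∫ u in (0:ℝ)..t, G u := hx_sol
  -- truncated integrand: bounded measurable version of the inner integrand
  have hcore : ∀ T : ℝ, ∃ gT : ℝ → ℝ, Measurable gT ∧ (∃ Cg : ℝ, 0 ≤ Cg ∧ ∀ s, |gT s| ≤ Cg) ∧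
      ∀ s : ℝ, s ≤ T → gT s = x s * Real.exp (-(a * x s)) := by
    intro T
    obtain ⟨C1, hC1⟩ := (isCompact_Icc (a := (0:ℝ)) (b := max T 0)).exists_bound_of_continuousOn
      hx_cont.continuousOn
    have hxbd : ∀ s : ℝ, s ≤ T → |x s| ≤ max C C1 := by
      intro s hs
      rcases le_or_gt s 0 with hs0 | hs0
      · rw [hx_init s hs0]
        exact le_trans (hC s hs0) (le_max_left _ _)
      · have : s ∈ Icc (0:ℝ) (max T 0) := ⟨hs0.le, le_trans hs (le_max_left _ _)⟩
        exact le_trans (hC1 s this) (le_max_right _ _)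
    set Cx := max C C1 with hCx
    have hCx0 : 0 ≤ Cx := le_trans (abs_nonneg (φ 0)) (le_trans (hC 0 le_rfl) (le_max_left _ _))
    refine ⟨fun s => if s ≤ T then x s * Real.exp (-(a * x s)) else 0, ?_,
      ⟨Cx * Real.exp (a * Cx), by positivity, ?_⟩, ?_⟩
    · apply Measurable.ite measurableSet_Iic
      · exact (hx_cont.measurable).mul
          ((Real.continuous_exp.comp (by continuity)).measurable)
      · exact measurable_const
    · intro s
      by_cases hs : s ≤ T
      · simp only [if_pos hs]
        rw [abs_mul, abs_of_pos (Real.exp_pos _)]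
        have h1 : |x s| ≤ Cx := hxbd s hs
        have h2 : Real.exp (-(a * x s)) ≤ Real.exp (a * Cx) := by
          apply Real.exp_le_exp.mpr
          have : -x s ≤ |x s| := neg_le_abs (x s)
          nlinarith [hxbd s hs]
        exact mul_le_mul h1 h2 (Real.exp_pos _).le hCx0
      · simp only [if_neg hs, abs_zero]
        positivity
    · intro s hs
      simp only [if_pos hs]
  -- a.e. equality with truncated integrand
  have hae : ∀ u T : ℝ, 0 ≤ u → u ≤ T → ∀ gT : ℝ → ℝ,
      (∀ s : ℝ, s ≤ T → gT s = x s * Real.exp (-(a * x s))) →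
      (fun s => x s * Real.exp (-(a * x s))) =ᵐ[μ u] gT := by
    intro u T hu huT gT hgT
    apply (ae_iff).mpr
    apply measure_mono_null _ (hμ_supp u hu)
    intro s hs
    simp only [mem_setOf_eq] at hs
    simp only [mem_compl_iff, mem_Icc, not_and_or, not_le]
    by_contra hcon
    push_neg at hcon
    exact hs ((hgT s (le_trans hcon.2 huT)).symm)
  have hInt_inner : ∀ u : ℝ, 0 ≤ u →
      Integrable (fun s => x s * Real.exp (-(a * x s))) (μ u) := by
    intro u hu
    haveI := hμ_prob u hu
    obtain ⟨gT, hmeas, ⟨Cg, hCg0, hCgb⟩, hgT⟩ := hcore u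
    have hIntgT : Integrable gT (μ u) := by
      apply Integrable.mono' (integrable_const Cg) hmeas.aestronglyMeasurable
      exact Eventually.of_forall (fun s => by rw [Real.norm_eq_abs]; exact hCgb s)
    exact hIntgT.congr ((hae u u hu le_rfl gT hgT).symm)
  have hN_ub : ∀ u B : ℝ, 0 ≤ u →
      (∀ s : ℝ, h u ≤ s → s ≤ u → x s * Real.exp (-(a * x s)) ≤ B) → N u ≤ B := by
    intro u B hu hB
    haveI := hμ_prob u hu
    have hBae : (fun s => x s * Real.exp (-(a * x s))) ≤ᵐ[μ u] (fun _ => B) := by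
      apply (ae_iff).mpr
      apply measure_mono_null _ (hμ_supp u hu)
      intro s hs
      simp only [mem_setOf_eq, not_le] at hs
      simp only [mem_compl_iff, mem_Icc, not_and_or, not_le]
      by_contra hcon
      push_neg at hcon
      exact absurd (hB s hcon.1 hcon.2) (not_le.mpr hs)
    calc N u ≤ ∫ _, B ∂(μ u) := integral_mono_ae (hInt_inner u hu) (integrable_const B) hBae
      _ = B := by simp
  have hN_lb : ∀ u B : ℝ, 0 ≤ u →
      (∀ s : ℝ, h u ≤ s → s ≤ u → B ≤ x s * Real.exp (-(a * x s))) → B ≤ N u := by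
    intro u B hu hB
    haveI := hμ_prob u hu
    have hBae : (fun _ : ℝ => B) ≤ᵐ[μ u] (fun s => x s * Real.exp (-(a * x s))) := by
      apply (ae_iff).mpr
      apply measure_mono_null _ (hμ_supp u hu)
      intro s hs
      simp only [mem_setOf_eq, not_le] at hs
      simp only [mem_compl_iff, mem_Icc, not_and_or, not_le]
      by_contra hcon
      push_neg at hcon
      exact absurd (hB s hcon.1 hcon.2) (not_le.mpr hs)
    calc B = ∫ _, B ∂(μ u) := by simp
      _ ≤ N u := integral_mono_ae (integrable_const B) (hInt_inner u hu) hBae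
  have hN_int : ∀ T1 T2 : ℝ, 0 ≤ T1 → T1 ≤ T2 → IntervalIntegrable N volume T1 T2 := by
    intro T1 T2 h1 h12
    obtain ⟨gT, hmeas, ⟨Cg, hCg0, hCgb⟩, hgT⟩ := hcore T2
    set M : ℝ → ℝ := fun u => ∫ s, gT s ∂(μ u) with hM
    have hMmeas : Measurable M := hμ_meas gT hmeas ⟨Cg, hCgb⟩
    have hNM : ∀ u, 0 ≤ u → u ≤ T2 → N u = M u := by
      intro u hu huT
      exact integral_congr_ae (hae u T2 hu huT gT hgT)
    have hMb : ∀ u, 0 ≤ u → |M u| ≤ Cg := by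
      intro u hu
      haveI := hμ_prob u hu
      have hIntgT : Integrable gT (μ u) := by
        apply Integrable.mono' (integrable_const Cg) hmeas.aestronglyMeasurable
        exact Eventually.of_forall (fun s => by rw [Real.norm_eq_abs]; exact hCgb s)
      calc |∫ s, gT s ∂(μ u)| ≤ ∫ s, |gT s| ∂(μ u) := by
            simpa [Real.norm_eq_abs] using norm_integral_le_integral_norm (μ := μ u) gT
        _ ≤ ∫ _, Cg ∂(μ u) :=
            integral_mono_ae hIntgT.abs (integrable_const _) (Eventually.of_forall hCgb)
        _ = Cg := by simp
    rw [intervalIntegrable_iff_integrableOn_Ioc_of_le h12]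
    have hMint : IntegrableOn M (Ioc T1 T2) volume := by
      apply Integrable.mono' (integrableOn_const (C := Cg) measure_Ioc_lt_top.ne)
        hMmeas.aestronglyMeasurable.restrict
      rw [ae_restrict_iff' measurableSet_Ioc]
      exact Eventually.of_forall (fun u hu => by
        rw [Real.norm_eq_abs]; exact hMb u (le_trans h1 hu.1.le))
    exact hMint.congr_fun (fun u hu => (hNM u (le_trans h1 hu.1.le) hu.2).symm) measurableSet_Ioc
  have hG_int : ∀ T1 T2 : ℝ, 0 ≤ T1 → T1 ≤ T2 → IntervalIntegrable G volume T1 T2 := by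
    intro T1 T2 h1 h12
    have hcx : Continuous fun u : ℝ => -(δ * x u) := by continuity
    exact (hcx.intervalIntegrable _ _).add ((hN_int T1 T2 h1 h12).const_mul p)
  have hsol' : ∀ s t : ℝ, 0 ≤ s → s ≤ t → x t - x s = ∫ u in s..t, G u := by
    intro s t h0 hst
    have e1 := hxs s h0
    have e2 := hxs t (le_trans h0 hst)
    have e3 := intervalIntegral.integral_add_adjacent_intervals (hG_int 0 s le_rfl h0)
      (hG_int s t h0 hst)
    linarith
  -- positivity of the solution
  have hx_pos : ∀ t : ℝ, 0 ≤ t → 0 < x t := by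
    by_contra hcon
    push_neg at hcon
    obtain ⟨t1, ht1, hxt1⟩ := hcon
    set S : Set ℝ := {t | 0 ≤ t ∧ x t ≤ 0} with hS
    have hSne : S.Nonempty := ⟨t1, ht1, hxt1⟩
    have hSclosed : IsClosed S := by
      have : S = Ici 0 ∩ x ⁻¹' (Iic 0) := by
        ext t; simp [hS, mem_Ici, mem_Iic, and_comm]
      rw [this]
      exact isClosed_Ici.inter (isClosed_Iic.preimage hx_cont)
    have hSbdd : BddBelow S := ⟨0, fun t ht => ht.1⟩
    set τ := sInf S with hτ
    have hτS : τ ∈ S := hSclosed.csInf_mem hSne hSbdd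
    have hτ0 : 0 ≤ τ := hτS.1
    have hxτ : x τ ≤ 0 := hτS.2
    have hτpos : 0 < τ := by
      rcases eq_or_lt_of_le hτ0 with hh | hh
      · exfalso; rw [← hh, hx0] at hxτ; linarith
      · exact hh
    have hlt : ∀ s : ℝ, 0 ≤ s → s < τ → 0 < x s := by
      intro s hs hsτ
      by_contra hcon2
      push_neg at hcon2
      exact absurd (csInf_le hSbdd (⟨hs, hcon2⟩ : s ∈ S)) (not_le.mpr hsτ)
    have hτge : 0 ≤ x τ := by
      have hsub : closure (Ico 0 τ) ⊆ {t | 0 ≤ x t} := by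
        apply (isClosed_le continuous_const hx_cont).closure_subset_iff.mpr
        intro s hs
        exact (hlt s hs.1 hs.2).le
      exact hsub (by
        rw [closure_Ico (ne_of_lt hτpos)]
        exact ⟨hτ0, le_rfl⟩)
    have hxτ0 : x τ = 0 := le_antisymm hxτ hτge
    have hge : ∀ s : ℝ, s ≤ τ → 0 ≤ x s := by
      intro s hs
      rcases le_or_gt s 0 with hs0 | hs0
      · rw [hx_init s hs0]; exact hφ_nonneg s hs0
      · rcases lt_or_eq_of_le hs with hlt2 | heq
        · exact (hlt s hs0.le hlt2).le
        · rw [heq, hxτ0]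
    have hvoc := nich_voc_lower (x := x) (G := G) (δ := δ) (α := 0) (v := 0) (b := τ) hδ hx_cont
      (fun t1 t2 h1 h2 _ => hG_int t1 t2 h1 h2)
      (fun s t h1 h2 _ => hsol' s t h1 h2)
      (by
        intro u hu hub
        have hNu : 0 ≤ N u := hN_lb u 0 hu (fun s hs1 hs2 => by
          have hx0' : 0 ≤ x s := hge s (le_trans hs2 hub)
          positivity)
        have h2 : 0 ≤ p * N u := mul_nonneg hp.le hNu
        have : -(δ * x u) + 0 ≤ -(δ * x u) + p * N u := by linarith
        exact this)
      hτ0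
    rw [hxτ0, hx0] at hvoc
    have hE := Real.exp_pos (-(δ * (τ - 0)))
    simp only [zero_div, zero_sub, neg_mul, neg_neg] at hvoc
    nlinarith
  have hx_nonneg : ∀ s : ℝ, 0 ≤ x s := by
    intro s
    rcases le_or_gt s 0 with hs | hs
    · rw [hx_init s hs]; exact hφ_nonneg s hs
    · exact (hx_pos s hs.le).le
  have hB0 : (0:ℝ) ≤ p * (a * Real.exp 1)⁻¹ / δ := by positivity
  have hG_ub_glob : ∀ u : ℝ, 0 ≤ u → G u ≤ -(δ * x u) + p * (a * Real.exp 1)⁻¹ := by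
    intro u hu
    have hNu : N u ≤ (a * Real.exp 1)⁻¹ :=
      hN_ub u _ hu (fun s _ _ => nich_ricker_max ha (hx_nonneg s))
    have : -(δ * x u) + p * N u ≤ -(δ * x u) + p * (a * Real.exp 1)⁻¹ := by nlinarith
    exact this
  set X : ℝ := max C (p * (a * Real.exp 1)⁻¹ / δ + φ 0) with hXdef
  have hxX : ∀ s : ℝ, x s ≤ X := by
    intro s
    rcases le_or_gt s 0 with hs | hs
    · rw [hx_init s hs]
      exact le_trans (le_abs_self _) (le_trans (hC s hs) (le_max_left _ _))
    · have hvoc := nich_voc_upper (x := x) (G := G) (δ := δ)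
        (β := p * (a * Real.exp 1)⁻¹) (v := 0) (b := s) hδ hx_cont
        (fun t1 t2 h1 h2 _ => hG_int t1 t2 h1 h2)
        (fun s t h1 h2 _ => hsol' s t h1 h2)
        (fun u hu _ => hG_ub_glob u hu)
        hs.le
      rw [hx0] at hvoc
      refine le_trans hvoc (le_trans ?_ (le_max_right _ _))
      have hE1 : Real.exp (-(δ * (s - 0))) ≤ 1 := by
        apply Real.exp_le_one_iff.mpr
        nlinarith
      have hE0 : (0:ℝ) < Real.exp (-(δ * (s - 0))) := Real.exp_pos _
      nlinarith [hφ_pos, hB0, mul_nonneg hB0 hE0.le]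
  have hX_pos : 0 < X := lt_of_lt_of_le hφ_pos (le_trans (by linarith [hB0]) (le_max_right C _))
  -- constants
  set c : ℝ := p / δ with hcdef
  have hc1 : 1 < c := (one_lt_div hδ).mpr hδp
  have hc0 : 0 < c := lt_trans one_pos hc1
  have hlogc_pos : 0 < Real.log c := Real.log_pos hc1
  have hlogc2 : Real.log c < 2 := by
    rw [Real.log_lt_iff_lt_exp hc0, hcdef, div_lt_iff₀ hδ]
    linarith
  have hbdd_above : IsBoundedUnder (· ≤ ·) atTop x := isBoundedUnder_of ⟨X, hxX⟩
  have hbdd_below : IsBoundedUnder (· ≥ ·) atTop x := isBoundedUnder_of ⟨0, hx_nonneg⟩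
  set m : ℝ := liminf x atTop with hmdef
  set M : ℝ := limsup x atTop with hMdef
  have hmM : m ≤ M := liminf_le_limsup hbdd_above hbdd_below
  -- the ε for persistence
  set ε : ℝ := Real.log c / (2 * a) with hεdef
  have hε_pos : 0 < ε := by rw [hεdef]; positivity
  have haε : a * ε = Real.log c / 2 := by rw [hεdef]; field_simp
  have hlam : 1 < c * Real.exp (-(a * ε)) := by
    rw [haε]
    have h2 : c * Real.exp (-(Real.log c / 2)) = Real.exp (Real.log c / 2) := by
      nth_rewrite 1 [← Real.exp_log hc0]
      rw [← Real.exp_add]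
      ring_nf
    rw [h2]
    exact Real.one_lt_exp_iff.mpr (by linarith)
  set X' : ℝ := max X ε with hX'def
  have hxX' : ∀ s, x s ≤ X' := fun s => le_trans (hxX s) (le_max_left _ _)
  have hεX' : ε ≤ X' := le_max_right _ _
  have hX'pos : 0 < X' := lt_of_lt_of_le hε_pos hεX'
  set βm : ℝ := min (ε * Real.exp (-(a * ε))) (X' * Real.exp (-(a * X'))) with hβm
  have hβm_pos : 0 < βm := lt_min (by positivity) (by positivity)
  have hpoint : ∀ ℓ y : ℝ, 0 < ℓ → ℓ ≤ βm → ℓ ≤ y → y ≤ X' →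
      Real.exp (-(a * ε)) * ℓ ≤ y * Real.exp (-(a * y)) := by
    intro ℓ y hℓ hℓβ hly hyX
    have hy0 : 0 < y := lt_of_lt_of_le hℓ hly
    rcases le_or_gt y ε with hyε | hyε
    · have h1 : Real.exp (-(a * ε)) ≤ Real.exp (-(a * y)) :=
        Real.exp_le_exp.mpr (by nlinarith)
      calc Real.exp (-(a * ε)) * ℓ ≤ Real.exp (-(a * ε)) * y :=
            mul_le_mul_of_nonneg_left hly (Real.exp_pos _).le
        _ ≤ Real.exp (-(a * y)) * y := mul_le_mul_of_nonneg_right h1 hy0.le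
        _ = y * Real.exp (-(a * y)) := mul_comm _ _
    · have h3 : βm ≤ y * Real.exp (-(a * y)) := by
        rw [hβm]; exact nich_ricker_lb ha hε_pos hyε.le hyX
      have hexp1 : Real.exp (-(a * ε)) ≤ 1 := Real.exp_le_one_iff.mpr (by nlinarith)
      nlinarith
  -- persistence: m > 0
  have hpersist : 0 < m := by
    obtain ⟨T2', hT2'⟩ := eventually_atTop.mp (hh_tend.eventually_ge_atTop 0)
    set T2 : ℝ := max T2' 0 with hT2def
    have hT20 : 0 ≤ T2 := le_max_right _ _
    have hhT2 : ∀ u, T2 ≤ u → 0 ≤ h u := fun u hu => hT2' u (le_trans (le_max_left _ _) hu)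
    obtain ⟨s₀, hs₀mem, hs₀min⟩ := (isCompact_Icc (a := (0:ℝ)) (b := T2)).exists_isMinOn
      (nonempty_Icc.mpr hT20) hx_cont.continuousOn
    have hρpos : 0 < x s₀ := hx_pos s₀ hs₀mem.1
    set c₀ : ℝ := min (x s₀ / 2) βm with hc₀def
    have hc₀pos : 0 < c₀ := lt_min (by linarith) hβm_pos
    have hc₀βm : c₀ ≤ βm := min_le_right _ _
    have hc₀ρ : c₀ ≤ x s₀ / 2 := min_le_left _ _
    have hclaim : ∀ t : ℝ, T2 ≤ t → c₀ < x t := by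
      by_contra hcon
      push_neg at hcon
      obtain ⟨t1, ht1, hxt1⟩ := hcon
      set S : Set ℝ := {t | T2 ≤ t ∧ x t ≤ c₀} with hS
      have hSne : S.Nonempty := ⟨t1, ht1, hxt1⟩
      have hSclosed : IsClosed S := by
        have hrw : S = Ici T2 ∩ x ⁻¹' (Iic c₀) := by
          ext t; simp [hS, mem_Ici, mem_Iic]
        rw [hrw]; exact isClosed_Ici.inter (isClosed_Iic.preimage hx_cont)
      have hSbdd : BddBelow S := ⟨T2, fun t ht => ht.1⟩
      set t' := sInf S with ht'def
      have ht'S : t' ∈ S := hSclosed.csInf_mem hSne hSbdd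
      have ht'T2 : T2 ≤ t' := ht'S.1
      have hxt' : x t' ≤ c₀ := ht'S.2
      have hT2x : c₀ < x T2 := by
        have : x s₀ ≤ x T2 := hs₀min ⟨hT20, le_rfl⟩
        linarith
      have ht'gt : T2 < t' := by
        rcases eq_or_lt_of_le ht'T2 with hh | hh
        · exfalso; rw [← hh] at hxt'; linarith
        · exact hh
      have hnotS : ∀ s : ℝ, T2 ≤ s → s < t' → c₀ < x s := by
        intro s hs hst
        by_contra hcon2
        push_neg at hcon2
        exact absurd (csInf_le hSbdd (⟨hs, hcon2⟩ : s ∈ S)) (not_le.mpr hst)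
      have ht'ge : c₀ ≤ x t' := by
        have hsub : closure (Ico T2 t') ⊆ {t | c₀ ≤ x t} := by
          apply (isClosed_le continuous_const hx_cont).closure_subset_iff.mpr
          intro s hs
          exact (hnotS s hs.1 hs.2).le
        exact hsub (by
          rw [closure_Ico (ne_of_lt ht'gt)]
          exact ⟨ht'T2, le_rfl⟩)
      have hlow : ∀ s : ℝ, 0 ≤ s → s ≤ t' → c₀ ≤ x s := by
        intro s hs0 hst'
        rcases le_or_gt s T2 with hsT2 | hsT2
        · have : x s₀ ≤ x s := hs₀min ⟨hs0, hsT2⟩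
          linarith
        · rcases lt_or_eq_of_le hst' with hh | hh
          · exact (hnotS s hsT2.le hh).le
          · rw [hh]; exact ht'ge
      have hvoc := nich_voc_lower (x := x) (G := G) (δ := δ)
        (α := p * (Real.exp (-(a * ε)) * c₀)) (v := T2) (b := t') hδ hx_cont
        (fun u1 u2 h1 h2 _ => hG_int u1 u2 (le_trans hT20 h1) h2)
        (fun u1 u2 h1 h2 _ => hsol' u1 u2 (le_trans hT20 h1) h2)
        (by
          intro u hu hub
          have hu0 : 0 ≤ u := le_trans hT20 hu
          have hNu : Real.exp (-(a * ε)) * c₀ ≤ N u := by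
            apply hN_lb u _ hu0
            intro s hs1 hs2
            have hs0 : 0 ≤ s := le_trans (hhT2 u hu) hs1
            exact hpoint c₀ (x s) hc₀pos hc₀βm (hlow s hs0 (le_trans hs2 hub)) (hxX' s)
          simp only [hGdef]
          nlinarith)
        ht'T2
      -- derive contradiction
      have hA : p * (Real.exp (-(a * ε)) * c₀) / δ = (c * Real.exp (-(a * ε))) * c₀ := by
        rw [hcdef]; field_simp
      rw [hA] at hvoc
      set E := Real.exp (-(δ * (t' - T2))) with hE
      have hE0 : 0 < E := Real.exp_pos _
      have hE1 : E ≤ 1 := Real.exp_le_one_iff.mpr (by nlinarith)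
      have hxT2 : c₀ < x T2 := hT2x
      have hgt : c₀ < x t' := by
        have h1 : (1:ℝ) * c₀ < (c * Real.exp (-(a * ε))) * c₀ :=
          mul_lt_mul_of_pos_right hlam hc₀pos
        nlinarith
      linarith
    refine lt_of_lt_of_le hc₀pos ?_
    rw [hmdef]
    apply le_liminf_of_le hbdd_above.isCoboundedUnder_ge
    exact eventually_atTop.mpr ⟨T2, fun t ht => (hclaim t ht).le⟩
  -- exponential decay helper
  have hdecay : ∀ V : ℝ, Tendsto (fun t : ℝ => Real.exp (-(δ * (t - V)))) atTop (nhds 0) := by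
    intro V
    have h1 : Tendsto (fun t : ℝ => t - V) atTop atTop :=
      tendsto_atTop_add_const_right atTop (-V) tendsto_id
    have h2 : Tendsto (fun t : ℝ => δ * (t - V)) atTop atTop := h1.const_mul_atTop hδ
    have h3 : Tendsto (fun t : ℝ => -(δ * (t - V))) atTop atBot := tendsto_neg_atTop_atBot.comp h2
    exact Real.tendsto_exp_atBot.comp h3
  -- witnesses for the fluctuation argument
  have hwitness : ∀ e : ℝ, 0 < e → e < m →
      (∃ y : ℝ, y ∈ Icc (m - e) (M + e) ∧ M ≤ c * (y * Real.exp (-(a * y)))) ∧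
      (∃ z : ℝ, z ∈ Icc (m - e) (M + e) ∧ c * (z * Real.exp (-(a * z))) ≤ m) := by
    intro e he hem
    have h1 : ∀ᶠ t in atTop, m - e < x t :=
      eventually_lt_of_lt_liminf (by rw [hmdef] at *; linarith) hbdd_below
    have h2 : ∀ᶠ t in atTop, x t < M + e :=
      eventually_lt_of_limsup_lt (by rw [hMdef] at *; linarith) hbdd_above
    obtain ⟨T1', hT1'⟩ := eventually_atTop.mp (h1.and h2)
    set T1 : ℝ := max T1' 0 with hT1def
    have hT1b : ∀ s, T1 ≤ s → m - e ≤ x s ∧ x s ≤ M + e := by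
      intro s hs
      have := hT1' s (le_trans (le_max_left _ _) hs)
      exact ⟨this.1.le, this.2.le⟩
    obtain ⟨T2', hT2'⟩ := eventually_atTop.mp (hh_tend.eventually_ge_atTop T1)
    set T2 : ℝ := max T2' T1 with hT2def
    have hT2T1 : T1 ≤ T2 := le_max_right _ _
    have hT10 : 0 ≤ T1 := le_max_right _ _
    have hT20 : 0 ≤ T2 := le_trans hT10 hT2T1
    have hhT2 : ∀ u, T2 ≤ u → T1 ≤ h u := fun u hu => hT2' u (le_trans (le_max_left _ _) hu)
    have hJne : (Icc (m - e) (M + e)).Nonempty := nonempty_Icc.mpr (by linarith)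
    have hgcont : Continuous (fun y : ℝ => y * Real.exp (-(a * y))) :=
      continuous_id.mul (Real.continuous_exp.comp ((continuous_const.mul continuous_id).neg))
    obtain ⟨ymax, hymem, hymax⟩ := (isCompact_Icc (a := m - e) (b := M + e)).exists_isMaxOn
      hJne hgcont.continuousOn
    obtain ⟨zmin, hzmem, hzmin⟩ := (isCompact_Icc (a := m - e) (b := M + e)).exists_isMinOn
      hJne hgcont.continuousOn
    have hxJ : ∀ u s : ℝ, T2 ≤ u → h u ≤ s → s ≤ u → x s ∈ Icc (m - e) (M + e) := by
      intro u s hu hs1 hs2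
      have := hT1b s (le_trans (hhT2 u hu) hs1)
      exact ⟨this.1, this.2⟩
    -- upper estimate
    have hMle : M ≤ c * (ymax * Real.exp (-(a * ymax))) := by
      set A : ℝ := p * (ymax * Real.exp (-(a * ymax))) / δ with hAdef
      have hupper : ∀ t, T2 ≤ t → x t ≤ A - (A - x T2) * Real.exp (-(δ * (t - T2))) := by
        intro t ht
        apply nich_voc_upper (x := x) (G := G) (δ := δ)
          (β := p * (ymax * Real.exp (-(a * ymax)))) (v := T2) (b := t) hδ hx_cont
          (fun u1 u2 hh1 hh2 _ => hG_int u1 u2 (le_trans hT20 hh1) hh2)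
          (fun u1 u2 hh1 hh2 _ => hsol' u1 u2 (le_trans hT20 hh1) hh2)
          ?_ ht
        intro u hu _
        have hNu : N u ≤ ymax * Real.exp (-(a * ymax)) := by
          apply hN_ub u _ (le_trans hT20 hu)
          intro s hs1 hs2
          exact hymax (hxJ u s hu hs1 hs2)
        simp only [hGdef]
        nlinarith
      have htendA : Tendsto (fun t : ℝ => A - (A - x T2) * Real.exp (-(δ * (t - T2))))
          atTop (nhds A) := by
        have := ((hdecay T2).const_mul (A - x T2)).const_sub A
        simpa using this
      have hMle' : M ≤ A := by
        rw [hMdef]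
        calc limsup x atTop ≤ limsup (fun t : ℝ => A - (A - x T2) * Real.exp (-(δ * (t - T2)))) atTop :=
              limsup_le_limsup (eventually_atTop.mpr ⟨T2, hupper⟩)
                hbdd_below.isCoboundedUnder_le htendA.isBoundedUnder_le
          _ = A := htendA.limsup_eq
      have : A = c * (ymax * Real.exp (-(a * ymax))) := by
        rw [hAdef, hcdef]; field_simp
      linarith [hMle']
    -- lower estimate
    have hmge : c * (zmin * Real.exp (-(a * zmin))) ≤ m := by
      set A : ℝ := p * (zmin * Real.exp (-(a * zmin))) / δ with hAdef
      have hlower : ∀ t, T2 ≤ t → A - (A - x T2) * Real.exp (-(δ * (t - T2))) ≤ x t := by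
        intro t ht
        apply nich_voc_lower (x := x) (G := G) (δ := δ)
          (α := p * (zmin * Real.exp (-(a * zmin)))) (v := T2) (b := t) hδ hx_cont
          (fun u1 u2 hh1 hh2 _ => hG_int u1 u2 (le_trans hT20 hh1) hh2)
          (fun u1 u2 hh1 hh2 _ => hsol' u1 u2 (le_trans hT20 hh1) hh2)
          ?_ ht
        intro u hu _
        have hNu : zmin * Real.exp (-(a * zmin)) ≤ N u := by
          apply hN_lb u _ (le_trans hT20 hu)
          intro s hs1 hs2
          exact hzmin (hxJ u s hu hs1 hs2)
        simp only [hGdef]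
        nlinarith
      have htendA : Tendsto (fun t : ℝ => A - (A - x T2) * Real.exp (-(δ * (t - T2))))
          atTop (nhds A) := by
        have := ((hdecay T2).const_mul (A - x T2)).const_sub A
        simpa using this
      have hmge' : A ≤ m := by
        rw [hmdef]
        calc A = liminf (fun t : ℝ => A - (A - x T2) * Real.exp (-(δ * (t - T2)))) atTop :=
              htendA.liminf_eq.symm
          _ ≤ liminf x atTop :=
              liminf_le_liminf (eventually_atTop.mpr ⟨T2, hlower⟩)
                htendA.isBoundedUnder_ge hbdd_above.isCoboundedUnder_ge
      have : A = c * (zmin * Real.exp (-(a * zmin))) := by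
        rw [hAdef, hcdef]; field_simp
      linarith [hmge']
    exact ⟨⟨ymax, hymem, hMle⟩, ⟨zmin, hzmem, hmge⟩⟩
  -- choose witness sequences
  have hws := fun n : ℕ => hwitness (m / ((n : ℝ) + 2))
    (by positivity)
    (by
      have hn2 : (1:ℝ) < (n:ℝ) + 2 := by
        have : (0:ℝ) ≤ (n:ℝ) := Nat.cast_nonneg n
        linarith
      exact div_lt_self hpersist hn2)
  choose y hy1 hy2 using fun n => (hws n).1
  choose z hz1 hz2 using fun n => (hws n).2
  have hen_le : ∀ n : ℕ, m / ((n:ℝ) + 2) ≤ m / 2 := by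
    intro n
    gcongr
    · have : (0:ℝ) ≤ (n:ℝ) := Nat.cast_nonneg n
      linarith
  have hen_m : ∀ n : ℕ, m / ((n:ℝ) + 2) ≤ m := by
    intro n
    have := hen_le n
    linarith [hpersist]
  have hyJ : ∀ n, y n ∈ Icc (m / 2) (M + m) := by
    intro n
    obtain ⟨h1, h2⟩ := hy1 n
    exact ⟨by linarith [hen_le n], by linarith [hen_m n]⟩
  have hzJ : ∀ n, z n ∈ Icc (m / 2) (M + m) := by
    intro n
    obtain ⟨h1, h2⟩ := hz1 n
    exact ⟨by linarith [hen_le n], by linarith [hen_m n]⟩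
  obtain ⟨ys, hysmem, ψ, hψ, hψtend⟩ :=
    (isCompact_Icc (a := m/2) (b := M + m)).tendsto_subseq hyJ
  obtain ⟨zs, hzsmem, χ, hχ, hχtend⟩ :=
    (isCompact_Icc (a := m/2) (b := M + m)).tendsto_subseq hzJ
  have hento : Tendsto (fun n : ℕ => m / ((n:ℝ) + 2)) atTop (nhds 0) := by
    have h1 : Tendsto (fun n : ℕ => ((n:ℝ) + 2)) atTop atTop :=
      tendsto_atTop_add_const_right atTop 2 tendsto_natCast_atTop_atTop
    have h2 := (h1.inv_tendsto_atTop).const_mul m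
    simpa [div_eq_mul_inv] using h2
  have hψat : Tendsto ψ atTop atTop := hψ.tendsto_atTop
  have hχat : Tendsto χ atTop atTop := hχ.tendsto_atTop
  have hysm : m ≤ ys := by
    have hlimlo : Tendsto (fun k : ℕ => m - m / ((ψ k : ℝ) + 2)) atTop (nhds m) := by
      have := (hento.comp hψat).const_sub m
      simpa using this
    exact le_of_tendsto_of_tendsto hlimlo hψtend
      (Eventually.of_forall (fun k => (hy1 (ψ k)).1))
  have hysM : ys ≤ M := by
    have hlimhi : Tendsto (fun k : ℕ => M + m / ((ψ k : ℝ) + 2)) atTop (nhds M) := by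
      have := (hento.comp hψat).const_add M
      simpa using this
    exact le_of_tendsto_of_tendsto hψtend hlimhi
      (Eventually.of_forall (fun k => (hy1 (ψ k)).2))
  have hzsm : m ≤ zs := by
    have hlimlo : Tendsto (fun k : ℕ => m - m / ((χ k : ℝ) + 2)) atTop (nhds m) := by
      have := (hento.comp hχat).const_sub m
      simpa using this
    exact le_of_tendsto_of_tendsto hlimlo hχtend
      (Eventually.of_forall (fun k => (hz1 (χ k)).1))
  have hzsM : zs ≤ M := by
    have hlimhi : Tendsto (fun k : ℕ => M + m / ((χ k : ℝ) + 2)) atTop (nhds M) := by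
      have := (hento.comp hχat).const_add M
      simpa using this
    exact le_of_tendsto_of_tendsto hχtend hlimhi
      (Eventually.of_forall (fun k => (hz1 (χ k)).2))
  have hRcont : Continuous (fun w : ℝ => c * (w * Real.exp (-(a * w)))) :=
    continuous_const.mul (continuous_id.mul
      (Real.continuous_exp.comp ((continuous_const.mul continuous_id).neg)))
  have hFys : M ≤ c * (ys * Real.exp (-(a * ys))) := by
    have htd : Tendsto (fun k : ℕ => c * (y (ψ k) * Real.exp (-(a * y (ψ k))))) atTop
        (nhds (c * (ys * Real.exp (-(a * ys))))) := (hRcont.tendsto ys).comp hψtend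
    exact ge_of_tendsto htd (Eventually.of_forall (fun k => hy2 (ψ k)))
  have hFzs : c * (zs * Real.exp (-(a * zs))) ≤ m := by
    have htd : Tendsto (fun k : ℕ => c * (z (χ k) * Real.exp (-(a * z (χ k))))) atTop
        (nhds (c * (zs * Real.exp (-(a * zs))))) := (hRcont.tendsto zs).comp hχtend
    exact le_of_tendsto htd (Eventually.of_forall (fun k => hz2 (χ k)))
  have hys0 : 0 < ys := lt_of_lt_of_le hpersist hysm
  have hzs0 : 0 < zs := lt_of_lt_of_le hpersist hzsm
  have hcE : ∀ w : ℝ, c * Real.exp (-(a * w)) = Real.exp (Real.log c - a * w) := by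
    intro w
    conv_lhs => rw [← Real.exp_log hc0]
    rw [← Real.exp_add]
    ring_nf
  have hysK : a * ys ≤ Real.log c := by
    have h1 : ys ≤ c * (ys * Real.exp (-(a * ys))) := le_trans hysM hFys
    have h2 : (1:ℝ) ≤ c * Real.exp (-(a * ys)) := by
      have hE := Real.exp_pos (-(a * ys))
      nlinarith
    rw [hcE ys] at h2
    have := Real.one_le_exp_iff.mp h2
    linarith
  have hzsK : Real.log c ≤ a * zs := by
    have h1 : c * (zs * Real.exp (-(a * zs))) ≤ zs := le_trans hFzs hzsm
    have h2 : c * Real.exp (-(a * zs)) ≤ 1 := by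
      have hE := Real.exp_pos (-(a * zs))
      nlinarith
    rw [hcE zs] at h2
    have := Real.exp_le_one_iff.mp h2
    linarith
  have hpair := nich_pair (c := c) (u := a * ys) (v := a * zs) hc1 hlogc2
    (by positivity) hysK hzsK
    (by
      have h1 := mul_le_mul_of_nonneg_left (le_trans hzsM hFys) ha.le
      calc a * zs ≤ a * (c * (ys * Real.exp (-(a * ys)))) := h1
        _ = c * (a * ys * Real.exp (-(a * ys))) := by ring)
    (by
      have h1 := mul_le_mul_of_nonneg_left (le_trans hFzs hysm) ha.le
      calc c * (a * zs * Real.exp (-(a * zs)))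
          = a * (c * (zs * Real.exp (-(a * zs)))) := by ring
        _ ≤ a * ys := h1)
  obtain ⟨hyeq, hzeq⟩ := hpair
  have hexp_ys : Real.exp (-(a * ys)) = c⁻¹ := by
    rw [hyeq, Real.exp_neg, Real.exp_log hc0]
  have hexp_zs : Real.exp (-(a * zs)) = c⁻¹ := by
    rw [hzeq, Real.exp_neg, Real.exp_log hc0]
  have hMys : M ≤ ys := by
    rw [hexp_ys] at hFys
    have hrw : c * (ys * c⁻¹) = ys := by field_simp
    linarith [hFys, hrw ▸ hFys]
  have hzsm' : zs ≤ m := by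
    rw [hexp_zs] at hFzs
    have hrw : c * (zs * c⁻¹) = zs := by field_simp
    linarith [hrw ▸ hFzs]
  have hysval : ys = Real.log c / a := by
    field_simp
    linarith [hyeq]
  have hzsval : zs = Real.log c / a := by
    field_simp
    linarith [hzeq]
  have hfin1 : M ≤ Real.log c / a := by rw [← hysval]; exact hMys
  have hfin2 : Real.log c / a ≤ m := by rw [← hzsval]; exact hzsm'
  have hm_eq : m = Real.log c / a := le_antisymm (le_trans hmM hfin1) hfin2
  have hM_eq : M = Real.log c / a := le_antisymm hfin1 (le_trans hfin2 hmM)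
  apply tendsto_of_liminf_eq_limsup ?_ ?_ hbdd_above hbdd_below
  · rw [← hmdef, hm_eq]; ring
  · rw [← hMdef, hM_eq]; ring
end

section
/- Consider the Mackey–Glass equation with distributed delay under hypotheses (a2), (a4), (a5). If a ≤ b, then every solution x with positive initial condition satisfies lim_{t→∞} x(t) = 0 (extinction). -/
open MeasureTheory Filter Set

private lemma psi_exists (γ K : ℝ) (hγ : 0 < γ) (hK : 0 < K) :
    ∃ ψ : ℝ, 0 ≤ ψ ∧ ψ < K ∧ ∀ v ∈ Set.Icc (0:ℝ) K, v / (1 + v ^ γ) ≤ ψ := by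
  have hcont : ContinuousOn (fun v : ℝ => v / (1 + v ^ γ)) (Set.Icc 0 K) := by
    apply ContinuousOn.div continuousOn_id
    · exact continuousOn_const.add (fun v hv =>
        (Real.continuousAt_rpow_const v γ (Or.inr hγ.le)).continuousWithinAt)
    · intro v hv
      have : 0 ≤ v ^ γ := Real.rpow_nonneg hv.1 γ
      linarith
  obtain ⟨w, hwmem, hmax⟩ := isCompact_Icc.exists_isMaxOn ⟨0, le_refl 0, hK.le⟩ hcont
  have hw0 : 0 ≤ w := hwmem.1
  have hdpos : (0:ℝ) < 1 + w ^ γ := by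
    have : 0 ≤ w ^ γ := Real.rpow_nonneg hw0 γ
    linarith
  refine ⟨w / (1 + w ^ γ), div_nonneg hw0 hdpos.le, ?_, fun v hv => hmax hv⟩
  rcases eq_or_lt_of_le hw0 with h0 | hwpos
  · simp [← h0]; positivity
  · have : 0 < w ^ γ := Real.rpow_pos_of_pos hwpos γ
    calc w / (1 + w ^ γ) < w := by
          exact div_lt_self hwpos (by linarith)
      _ ≤ K := hwmem.2

private lemma psi_shift (γ K ψK ε : ℝ) (hγ : 0 < γ) (hK : 0 < K) (hε : 0 ≤ ε)
    (hub : ∀ v ∈ Set.Icc (0:ℝ) K, v / (1 + v ^ γ) ≤ ψK) :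
    ∀ v ∈ Set.Icc (0:ℝ) (K + ε), v / (1 + v ^ γ) ≤ ψK + ε := by
  intro v hv
  rcases le_or_gt v K with hle | hlt
  · exact (hub v ⟨hv.1, hle⟩).trans (by linarith)
  · have hvpos : 0 < v := hK.trans hlt
    have hvγ : 0 ≤ v ^ γ := Real.rpow_nonneg hv.1 γ
    have hd : 0 < 1 + v ^ γ := by linarith
    have h1 : v / (1 + v ^ γ) = (v - K) / (1 + v ^ γ) + K / (1 + v ^ γ) := by ring
    have h2 : (v - K) / (1 + v ^ γ) ≤ ε :=
      (div_le_self (by linarith) (by linarith)).trans (by linarith [hv.2])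
    have h3 : K / (1 + v ^ γ) ≤ K / (1 + K ^ γ) := by
      have hKγ : K ^ γ ≤ v ^ γ := Real.rpow_le_rpow hK.le hlt.le hγ.le
      have : 0 < 1 + K ^ γ := by
        have : 0 ≤ K ^ γ := Real.rpow_nonneg hK.le γ
        linarith
      exact div_le_div_of_nonneg_left hK.le this (by linarith)
    have h4 : K / (1 + K ^ γ) ≤ ψK := hub K ⟨hK.le, le_refl K⟩
    linarith

private lemma no_up_cross (x H : ℝ → ℝ) (τ t c : ℝ) (hx : Continuous x) (hτt : τ ≤ t)
    (heq : ∀ t₁, τ ≤ t₁ → t₁ ≤ t → x t - x t₁ = ∫ u in t₁..t, H u)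
    (hH : ∀ u, τ ≤ u → u ≤ t → c ≤ x u → H u ≤ 0)
    (hxτ : x τ ≤ c) : x t ≤ c := by
  by_contra hxt
  push_neg at hxt
  set S := Icc τ t ∩ {s | x s ≤ c} with hSdef
  have hSne : S.Nonempty := ⟨τ, ⟨le_refl τ, hτt⟩, hxτ⟩
  have hSbdd : BddAbove S := ⟨t, fun s hs => hs.1.2⟩
  have hSclosed : IsClosed S := isClosed_Icc.inter (isClosed_le hx continuous_const)
  have hσS : sSup S ∈ S := hSclosed.csSup_mem hSne hSbdd
  set σ := sSup S with hσdef
  have hσt : σ ≤ t := hσS.1.2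
  have hστ : τ ≤ σ := hσS.1.1
  have hxσ : x σ ≤ c := hσS.2
  have hgt : ∀ s, σ < s → s ≤ t → c < x s := by
    intro s hs1 hs2
    by_contra hcs
    push_neg at hcs
    exact absurd (le_csSup hSbdd (⟨⟨hστ.trans hs1.le, hs2⟩, hcs⟩ : s ∈ S)) (not_le.mpr hs1)
  have hσlt : σ < t := lt_of_le_of_ne hσt (fun hst => hxt.not_ge (hst ▸ hxσ))
  have hge : ∀ u, σ ≤ u → u ≤ t → c ≤ x u := by
    intro u hu1 hu2
    rcases eq_or_lt_of_le hu1 with heq' | hlt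
    · rw [← heq']
      have hT : Tendsto x (nhdsWithin σ (Ioi σ)) (nhds (x σ)) :=
        (hx.continuousAt).continuousWithinAt.tendsto
      refine ge_of_tendsto hT ?_
      filter_upwards [Ioc_mem_nhdsGT_of_mem ⟨le_refl σ, hσlt⟩] with s hs
      exact (hgt s hs.1 hs.2).le
    · exact (hgt u hlt hu2).le
  have hint_nonpos : ∫ u in σ..t, H u ≤ 0 := by
    have h1 : (0:ℝ) ≤ ∫ u in σ..t, -H u :=
      intervalIntegral.integral_nonneg hσlt.le
        (fun u hu => by simpa using hH u (hστ.trans hu.1) hu.2 (hge u hu.1 hu.2))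
    rw [intervalIntegral.integral_neg] at h1
    linarith
  linarith [hxt, hxσ, heq σ hστ hσt]

private lemma comes_down (x H : ℝ → ℝ) (τ c δ M : ℝ) (hδ : 0 < δ)
    (heq : ∀ t₂, τ ≤ t₂ → x t₂ - x τ = ∫ u in τ..t₂, H u)
    (hint : ∀ t₂, τ ≤ t₂ → IntervalIntegrable H MeasureTheory.volume τ t₂)
    (hH : ∀ u, τ ≤ u → c ≤ x u → H u ≤ -δ)
    (hlow : ∀ u, 0 ≤ x u) (hup : x τ ≤ M) :
    ∃ t, τ ≤ t ∧ x t ≤ c := by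
  by_contra hc
  push_neg at hc
  have hM0 : 0 ≤ M := (hlow τ).trans hup
  set K := (M + 1) / δ with hK
  have hKpos : 0 < K := by positivity
  have hτK : τ ≤ τ + K := by linarith
  have h1 : x (τ + K) - x τ = ∫ u in τ..(τ + K), H u := heq _ hτK
  have h2 : ∫ u in τ..(τ + K), H u ≤ ∫ u in τ..(τ + K), (-δ) := by
    refine intervalIntegral.integral_mono_on hτK (hint _ hτK) intervalIntegrable_const ?_
    intro u hu
    exact hH u hu.1 (hc u hu.1).le
  rw [intervalIntegral.integral_const, smul_eq_mul] at h2
  have h3 : (τ + K - τ) * (-δ) = -(M + 1) := by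
    have hδ' : δ ≠ 0 := ne_of_gt hδ
    field_simp [hK]
    rw [hK, add_sub_cancel_left, div_mul_cancel₀ _ hδ']
  have := hlow (τ + K)
  nlinarith

set_option maxHeartbeats 2000000 in
theorem mackey_glass_extinction
    (a b γ : ℝ) (ha : 0 < a) (hb : 0 < b) (hγ : 0 < γ)
    (h : ℝ → ℝ) (μ : ℝ → Measure ℝ) (φ : ℝ → ℝ)
    (hh_meas : Measurable h)
    (hh_le : ∀ t : ℝ, 0 ≤ t → h t ≤ t)
    (hh_tend : Tendsto h atTop atTop)
    (hμ_prob : ∀ t : ℝ, 0 ≤ t → IsProbabilityMeasure (μ t))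
    (hμ_supp : ∀ t : ℝ, 0 ≤ t → μ t (Icc (h t) t)ᶜ = 0)
    (hμ_meas : ∀ g : ℝ → ℝ, Measurable g → (∃ C : ℝ, ∀ y : ℝ, |g y| ≤ C) →
      Measurable (fun t => ∫ s, g s ∂(μ t)))
    (hφ_cont : ContinuousOn φ (Iic (0 : ℝ)))
    (hφ_bdd : ∃ C : ℝ, ∀ t : ℝ, t ≤ 0 → |φ t| ≤ C)
    (hφ_nonneg : ∀ t : ℝ, t ≤ 0 → 0 ≤ φ t)
    (hφ_pos : 0 < φ 0)
    (x : ℝ → ℝ)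
    (hx_cont : Continuous x)
    (hx_init : ∀ t : ℝ, t ≤ 0 → x t = φ t)
    (hx_sol : ∀ t : ℝ, 0 ≤ t →
      x t = φ 0 + ∫ u in (0:ℝ)..t,
        ((∫ s, (a * x s) / (1 + x s ^ γ) ∂(μ u)) - b * x u))
    (hab : a ≤ b) :
    Tendsto x atTop (nhds 0) := by
  classical
  obtain ⟨C, hC⟩ := hφ_bdd
  have hC0 : 0 < C := lt_of_lt_of_le hφ_pos ((le_abs_self _).trans (hC 0 le_rfl))
  -- ε₀
  set ε₀ : ℝ := min ((2:ℝ)⁻¹ ^ γ⁻¹) 1 with hε₀def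
  have hε₀pos : 0 < ε₀ := lt_min (Real.rpow_pos_of_pos (by norm_num) _) one_pos
  have hε₀le1 : ε₀ ≤ 1 := min_le_right _ _
  have hε₀pow : ∀ v : ℝ, |v| ≤ ε₀ → |v ^ γ| ≤ 1/2 := by
    intro v hv
    have h1 : |v ^ γ| ≤ |v| ^ γ := Real.abs_rpow_le_abs_rpow v γ
    have h2 : |v| ^ γ ≤ ε₀ ^ γ := Real.rpow_le_rpow (abs_nonneg v) hv hγ.le
    have h3 : ε₀ ^ γ ≤ ((2:ℝ)⁻¹ ^ γ⁻¹) ^ γ :=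
      Real.rpow_le_rpow hε₀pos.le (min_le_left _ _) hγ.le
    have h4 : ((2:ℝ)⁻¹ ^ γ⁻¹) ^ γ = (2:ℝ)⁻¹ := by
      rw [← Real.rpow_mul (by norm_num), inv_mul_cancel₀ (ne_of_gt hγ), Real.rpow_one]
    rw [h4] at h3
    norm_num at h3 ⊢
    linarith
  -- proj and q
  set proj : ℝ → ℝ := fun v => max (min v (C+1)) (-ε₀) with hprojdef
  set q : ℝ → ℝ := fun v => a * proj v / (1 + proj v ^ γ) with hqdef
  have hproj_mem : ∀ v : ℝ, proj v ∈ Icc (-ε₀) (C+1) := by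
    intro v
    constructor
    · exact le_max_right _ _
    · exact max_le (min_le_right _ _) (by linarith)
  have hproj_eq : ∀ v ∈ Icc (-ε₀) (C+1), proj v = v := by
    intro v hv
    simp only [hprojdef]
    rw [min_eq_left hv.2, max_eq_left hv.1]
  have hdenom : ∀ v : ℝ, (1:ℝ)/2 ≤ 1 + proj v ^ γ := by
    intro v
    rcases le_or_gt 0 (proj v) with hp | hp
    · have : 0 ≤ proj v ^ γ := Real.rpow_nonneg hp γ
      linarith
    · have habs : |proj v| ≤ ε₀ := by
        have := (hproj_mem v).1
        rw [abs_le]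
        constructor
        · linarith
        · linarith [hε₀pos]
      have := hε₀pow (proj v) habs
      have := abs_le.mp this
      linarith [this.1]
  have hdenom_pos : ∀ v : ℝ, (0:ℝ) < 1 + proj v ^ γ :=
    fun v => lt_of_lt_of_le (by norm_num) (hdenom v)
  have hq_bdd : ∀ v : ℝ, |q v| ≤ 2*a*(C+1) := by
    intro v
    have hpb : |proj v| ≤ C + 1 := by
      have h1 := (hproj_mem v).1
      have h2 := (hproj_mem v).2
      rw [abs_le]
      constructor <;> [linarith [hε₀le1, hC0]; linarith]
    rw [hqdef, abs_div, abs_of_pos (hdenom_pos v), abs_mul, abs_of_pos ha]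
    rw [div_le_iff₀ (hdenom_pos v)]
    nlinarith [hdenom v, abs_nonneg (proj v), mul_le_mul_of_nonneg_left hpb ha.le,
      mul_nonneg (mul_nonneg (by norm_num : (0:ℝ) ≤ 2) ha.le) (by linarith : (0:ℝ) ≤ C+1)]
  have hq_cont : Continuous q := by
    have hpc : Continuous proj := ((continuous_id.min continuous_const).max continuous_const)
    have hrc : Continuous (fun w : ℝ => w ^ γ) := by
      rw [continuous_iff_continuousAt]
      exact fun w => Real.continuousAt_rpow_const w γ (Or.inr hγ.le)
    exact ((continuous_const.mul hpc).div ((continuous_const.add (hrc.comp hpc)))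
      (fun v => ne_of_gt (hdenom_pos v)))
  have hq_nonneg : ∀ v : ℝ, 0 ≤ v → 0 ≤ q v := by
    intro v hv
    have : 0 ≤ proj v := le_max_of_le_left (le_min hv (by linarith))
    exact div_nonneg (by positivity) (hdenom_pos v).le
  have hq_eqn : ∀ v ∈ Icc (-ε₀) (C+1), q v = a * v / (1 + v ^ γ) := by
    intro v hv
    rw [hqdef]
    simp only
    rw [hproj_eq v hv]
  -- G
  set G : ℝ → ℝ := fun u => ∫ s, q (x s) ∂ μ u with hGdef
  have hqx_meas : Measurable (fun s => q (x s)) := (hq_cont.comp hx_cont).measurable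
  have hG_meas : Measurable G := hμ_meas _ hqx_meas ⟨2*a*(C+1), fun y => hq_bdd (x y)⟩
  have hqx_int : ∀ u : ℝ, 0 ≤ u → Integrable (fun s => q (x s)) (μ u) := by
    intro u hu
    haveI := hμ_prob u hu
    have hb' : ∀ᵐ s ∂ μ u, ‖q (x s)‖ ≤ 2*a*(C+1) :=
      Eventually.of_forall (fun s => by simpa [Real.norm_eq_abs] using hq_bdd (x s))
    exact ⟨hqx_meas.aestronglyMeasurable, HasFiniteIntegral.of_bounded hb'⟩
  have hG_bdd : ∀ u : ℝ, 0 ≤ u → |G u| ≤ 2*a*(C+1) := by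
    intro u hu
    haveI := hμ_prob u hu
    have hb' : ∀ᵐ s ∂ μ u, ‖q (x s)‖ ≤ 2*a*(C+1) :=
      Eventually.of_forall (fun s => by simpa [Real.norm_eq_abs] using hq_bdd (x s))
    have := norm_integral_le_of_norm_le_const (μ := μ u) hb'
    simpa [Real.norm_eq_abs] using this
  have hG_ub : ∀ u : ℝ, 0 ≤ u → ∀ c : ℝ, (∀ s ∈ Icc (h u) u, q (x s) ≤ c) → G u ≤ c := by
    intro u hu c hc
    haveI := hμ_prob u hu
    have hae : ∀ᵐ s ∂ μ u, q (x s) ≤ c := by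
      rw [ae_iff]
      refine measure_mono_null ?_ (hμ_supp u hu)
      intro s hs
      simp only [mem_setOf_eq, not_le] at hs
      intro hmem
      exact absurd (hc s hmem) (not_le.mpr hs)
    calc G u ≤ ∫ _ , c ∂ μ u := integral_mono_ae (hqx_int u hu) (integrable_const c) hae
      _ = c := by simp
  have hG_lb : ∀ u : ℝ, 0 ≤ u → ∀ c : ℝ, (∀ s ∈ Icc (h u) u, c ≤ q (x s)) → c ≤ G u := by
    intro u hu c hc
    haveI := hμ_prob u hu
    have hae : ∀ᵐ s ∂ μ u, c ≤ q (x s) := by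
      rw [ae_iff]
      refine measure_mono_null ?_ (hμ_supp u hu)
      intro s hs
      simp only [mem_setOf_eq, not_le] at hs
      intro hmem
      exact absurd (hc s hmem) (not_le.mpr hs)
    calc c = ∫ _ , c ∂ μ u := by simp
      _ ≤ G u := integral_mono_ae (integrable_const c) (hqx_int u hu) hae
  -- interval integrability
  have hHint : ∀ t₁ t₂ : ℝ, 0 ≤ t₁ → t₁ ≤ t₂ →
      IntervalIntegrable (fun u => G u - b * x u) MeasureTheory.volume t₁ t₂ := by
    intro t₁ t₂ h1 h2
    have hGint : IntervalIntegrable G MeasureTheory.volume t₁ t₂ := by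
      rw [intervalIntegrable_iff_integrableOn_Ioc_of_le h2]
      constructor
      · exact hG_meas.aestronglyMeasurable.restrict
      · apply HasFiniteIntegral.of_bounded (C := 2*a*(C+1))
        filter_upwards [ae_restrict_mem measurableSet_Ioc] with u hu
        rw [Real.norm_eq_abs]
        exact hG_bdd u (h1.trans hu.1.le)
    exact hGint.sub ((continuous_const.mul hx_cont).intervalIntegrable _ _)
  -- rewriting the solution equation
  have hFG : ∀ u : ℝ, 0 ≤ u → (∀ s : ℝ, s ≤ u → x s ∈ Icc (-ε₀) (C+1)) →
      (∫ s, (a * x s) / (1 + x s ^ γ) ∂ μ u) = G u := by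
    intro u hu hr
    refine integral_congr_ae ?_
    rw [Filter.EventuallyEq, ae_iff]
    refine measure_mono_null ?_ (hμ_supp u hu)
    intro s hs
    simp only [mem_setOf_eq] at hs
    intro hmem
    exact hs ((hq_eqn (x s) (hr s hmem.2)).symm)
  have hsol' : ∀ t : ℝ, 0 ≤ t → (∀ s : ℝ, s ≤ t → x s ∈ Icc (-ε₀) (C+1)) →
      x t = φ 0 + ∫ u in (0:ℝ)..t, (G u - b * x u) := by
    intro t ht hr
    rw [hx_sol t ht]
    congr 1
    apply intervalIntegral.integral_congr
    intro u hu
    rw [uIcc_of_le ht] at hu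
    have : (∫ s, (a * x s) / (1 + x s ^ γ) ∂ μ u) = G u :=
      hFG u hu.1 (fun s hs => hr s (hs.trans hu.2))
    simp only [this]
  have hdiff : ∀ t₁ t₂ : ℝ, 0 ≤ t₁ → t₁ ≤ t₂ →
      (∀ s : ℝ, s ≤ t₂ → x s ∈ Icc (-ε₀) (C+1)) →
      x t₂ - x t₁ = ∫ u in t₁..t₂, (G u - b * x u) := by
    intro t₁ t₂ h1 h2 hr
    have e1 := hsol' t₁ h1 (fun s hs => hr s (hs.trans h2))
    have e2 := hsol' t₂ (h1.trans h2) hr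
    have hadd := intervalIntegral.integral_add_adjacent_intervals
      (hHint 0 t₁ le_rfl h1) (hHint t₁ t₂ h1 h2)
    rw [e1, e2]
    linarith [hadd]
  -- initial data bounds
  have hx0 : x 0 = φ 0 := hx_init 0 le_rfl
  have hx_neg : ∀ s : ℝ, s ≤ 0 → 0 ≤ x s ∧ x s ≤ C := by
    intro s hs
    rw [hx_init s hs]
    exact ⟨hφ_nonneg s hs, (le_abs_self _).trans (hC s hs)⟩
  obtain ⟨ψ, hψ0, hψC, hψub⟩ := psi_exists γ C hγ hC0
  -- Phase 1: invariance of [0, C]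
  have hinv : ∀ t : ℝ, 0 ≤ x t ∧ x t ≤ C := by
    intro t
    by_contra hPt
    set bad := {s : ℝ | ¬ (0 ≤ x s ∧ x s ≤ C)} with hbaddef
    have hbadne : bad.Nonempty := ⟨t, hPt⟩
    have hbadpos : ∀ s ∈ bad, 0 < s := by
      intro s hs
      by_contra hs0
      push_neg at hs0
      exact hs (hx_neg s hs0)
    have hbdd : BddBelow bad := ⟨0, fun s hs => (hbadpos s hs).le⟩
    set t0 := sInf bad with ht0def
    have ht0nonneg : 0 ≤ t0 := le_csInf hbadne (fun s hs => (hbadpos s hs).le)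
    have hgood : ∀ s, s < t0 → 0 ≤ x s ∧ x s ≤ C := by
      intro s hs
      by_contra hPs
      exact absurd (csInf_le hbdd hPs) (not_le.mpr hs)
    have hPt0 : 0 ≤ x t0 ∧ x t0 ≤ C := by
      have hT : Tendsto x (nhdsWithin t0 (Iio t0)) (nhds (x t0)) :=
        (hx_cont.continuousAt).continuousWithinAt.tendsto
      constructor
      · refine ge_of_tendsto hT ?_
        filter_upwards [self_mem_nhdsWithin] with s hs
        exact (hgood s hs).1
      · refine le_of_tendsto hT ?_
        filter_upwards [self_mem_nhdsWithin] with s hs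
        exact (hgood s hs).2
    have hhist : ∀ s, s ≤ t0 → 0 ≤ x s ∧ x s ≤ C := fun s hs =>
      hs.lt_or_eq.elim (hgood s) (fun he => he ▸ hPt0)
    have hfreq : ∀ η : ℝ, 0 < η → ∃ s₀, s₀ ∈ bad ∧ t0 < s₀ ∧ s₀ < t0 + η := by
      intro η hη
      obtain ⟨s, hsbad, hslt⟩ := exists_lt_of_csInf_lt hbadne (by linarith : t0 < t0 + η)
      refine ⟨s, hsbad, ?_, hslt⟩
      rcases lt_or_eq_of_le (csInf_le hbdd hsbad) with hlt | heq
      · exact hlt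
      · exact absurd hPt0 (by rw [ht0def, heq]; exact hsbad)
    rcases eq_or_lt_of_le hPt0.2 with hxC | hxltC
    · -- Case B : x t0 = C
      set D := b*C - a*ψ with hDdef
      have hD : 0 < D := by nlinarith
      set ε := min (min ε₀ 1) (min C (D/(a+b+1))) with hεdef
      have hεpos : 0 < ε :=
        lt_min (lt_min hε₀pos one_pos) (lt_min hC0 (by positivity))
      have hεε₀ : ε ≤ ε₀ := (min_le_left _ _).trans (min_le_left _ _)
      have hε1 : ε ≤ 1 := (min_le_left _ _).trans (min_le_right _ _)
      have hεC : ε ≤ C := (min_le_right _ _).trans (min_le_left _ _)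
      have hεD : ε ≤ D/(a+b+1) := (min_le_right _ _).trans (min_le_right _ _)
      have hmargin : a*(ψ+ε) - b*(C-ε) < 0 := by
        have hpos : (0:ℝ) < a+b+1 := by linarith
        have h2 : (a+b) * (D/(a+b+1)) < D := by
          rw [mul_comm, div_mul_eq_mul_div, div_lt_iff₀ hpos]
          nlinarith
        have h3 : (a+b)*ε ≤ (a+b)*(D/(a+b+1)) :=
          mul_le_mul_of_nonneg_left hεD (by linarith)
        have : a*(ψ+ε) - b*(C-ε) = -D + (a+b)*ε := by rw [hDdef]; ring
        linarith
      obtain ⟨η0, hη0pos, hη0⟩ := Metric.continuousAt_iff.mp hx_cont.continuousAt ε hεpos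
      obtain ⟨s₀, hs₀bad, hs₀gt, hs₀lt⟩ := hfreq (min η0 (1/(4*a+1)))
        (lt_min hη0pos (by positivity))
      have hclose : ∀ s ∈ Icc t0 s₀, |x s - x t0| < ε := by
        intro s hs
        have hd : dist s t0 < η0 := by
          rw [Real.dist_eq, abs_of_nonneg (by linarith [hs.1])]
          have := min_le_left η0 (1/(4*a+1))
          linarith [hs.2]
        have := hη0 hd
        rwa [Real.dist_eq] at this
      have hall : ∀ s : ℝ, s ≤ s₀ → x s ∈ Icc (-ε₀) (C+1) := by
        intro s hs
        rcases le_or_gt s t0 with h1 | h1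
        · have := hhist s h1
          exact ⟨by linarith [hε₀pos], by linarith⟩
        · have := abs_lt.mp (hclose s ⟨h1.le, hs⟩)
          rw [hxC] at this
          exact ⟨by linarith [hεC, hε₀pos, this.1], by linarith [hε1, this.2]⟩
      have hψ' := psi_shift γ C ψ ε hγ hC0 hεpos.le hψub
      have hHle : ∀ u ∈ Icc t0 s₀, G u - b * x u ≤ a*(ψ+ε) - b*(C-ε) := by
        intro u hu
        have hu0 : 0 ≤ u := ht0nonneg.trans hu.1
        have hGu : G u ≤ a*(ψ+ε) := by
          apply hG_ub u hu0
          intro s hsmem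
          have hsle : s ≤ s₀ := hsmem.2.trans hu.2
          have hxs : x s ∈ Icc 0 (C+ε) := by
            rcases le_or_gt s t0 with h1 | h1
            · exact ⟨(hhist s h1).1, by linarith [(hhist s h1).2]⟩
            · have h2 := abs_lt.mp (hclose s ⟨h1.le, hsle⟩)
              rw [hxC] at h2
              exact ⟨by linarith [h2.1, hεC], by linarith [h2.2]⟩
          have hq_eq : q (x s) = a * x s / (1 + x s ^ γ) :=
            hq_eqn (x s) ⟨by linarith [hxs.1, hε₀pos], by linarith [hxs.2, hε1]⟩
          rw [hq_eq, mul_div_assoc]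
          exact mul_le_mul_of_nonneg_left (hψ' (x s) hxs) ha.le
        have h3 := abs_lt.mp (hclose u hu)
        rw [hxC] at h3
        have hxu : C - ε ≤ x u := by linarith [h3.1]
        nlinarith [mul_le_mul_of_nonneg_left hxu hb.le]
      have hdiffeq := hdiff t0 s₀ ht0nonneg hs₀gt.le hall
      have hint_np : ∫ u in t0..s₀, (G u - b * x u) ≤ 0 := by
        have h1 : (0:ℝ) ≤ ∫ u in t0..s₀, -(G u - b * x u) :=
          intervalIntegral.integral_nonneg hs₀gt.le (fun u hu => by
            have := hHle u hu
            linarith [hmargin])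
        rw [intervalIntegral.integral_neg] at h1
        linarith
      have h4 := abs_lt.mp (hclose s₀ ⟨hs₀gt.le, le_refl s₀⟩)
      rw [hxC] at h4
      exact hs₀bad ⟨by linarith [h4.1, hεC], by linarith [hdiffeq, hint_np, hxC]⟩
    rcases eq_or_lt_of_le hPt0.1 with hx00 | hxpos
    · -- Case C : x t0 = 0   (hx00 : 0 = x t0)
      set ε := min ε₀ C with hεdef
      have hεpos : 0 < ε := lt_min hε₀pos hC0
      have hεε₀ : ε ≤ ε₀ := min_le_left _ _
      have hεC : ε ≤ C := min_le_right _ _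
      obtain ⟨η0, hη0pos, hη0⟩ := Metric.continuousAt_iff.mp hx_cont.continuousAt ε hεpos
      obtain ⟨s₀, hs₀bad, hs₀gt, hs₀lt⟩ := hfreq (min η0 (1/(4*a+1)))
        (lt_min hη0pos (by positivity))
      have hclose : ∀ s ∈ Icc t0 s₀, |x s| < ε := by
        intro s hs
        have hd : dist s t0 < η0 := by
          rw [Real.dist_eq, abs_of_nonneg (by linarith [hs.1])]
          have := min_le_left η0 (1/(4*a+1))
          linarith [hs.2]
        have h5 := hη0 hd
        rw [Real.dist_eq, ← hx00] at h5
        simpa using h5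
      have hall : ∀ s : ℝ, s ≤ s₀ → x s ∈ Icc (-ε₀) (C+1) := by
        intro s hs
        rcases le_or_gt s t0 with h1 | h1
        · have := hhist s h1
          exact ⟨by linarith [hε₀pos], by linarith⟩
        · have h2 := abs_lt.mp (hclose s ⟨h1.le, hs⟩)
          exact ⟨by linarith [hεε₀, h2.1], by linarith [hεC, h2.2]⟩
      have hxs₀neg : x s₀ < 0 := by
        by_contra hge
        push_neg at hge
        have h2 := abs_lt.mp (hclose s₀ ⟨hs₀gt.le, le_refl s₀⟩)
        exact hs₀bad ⟨hge, by linarith [h2.2, hεC]⟩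
      obtain ⟨tm, htm_mem, htm_min⟩ :=
        isCompact_Icc.exists_isMinOn (nonempty_Icc.mpr hs₀gt.le) hx_cont.continuousOn
      have hxtm_le : x tm ≤ x s₀ := htm_min ⟨hs₀gt.le, le_refl s₀⟩
      set m := -x tm with hmdef
      have hmpos : 0 < m := by simp only [hmdef]; linarith
      have hmlt : m < ε := by
        have := abs_lt.mp (hclose tm htm_mem)
        simp only [hmdef]
        linarith [this.1]
      set Sσ := Icc t0 tm ∩ {s | 0 ≤ x s} with hSσdef
      have hSσne : Sσ.Nonempty := ⟨t0, ⟨le_refl t0, htm_mem.1⟩, by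
        simp only [mem_setOf_eq]
        exact hx00.le⟩
      have hSσbdd : BddAbove Sσ := ⟨tm, fun s hs => hs.1.2⟩
      have hSσcl : IsClosed Sσ := isClosed_Icc.inter (isClosed_le continuous_const hx_cont)
      have hσS : sSup Sσ ∈ Sσ := hSσcl.csSup_mem hSσne hSσbdd
      set σ := sSup Sσ with hσdef
      have hσt0 : t0 ≤ σ := hσS.1.1
      have hσtm : σ ≤ tm := hσS.1.2
      have hxσ0 : 0 ≤ x σ := hσS.2
      have hneg : ∀ s, σ < s → s ≤ tm → x s < 0 := by
        intro s hs1 hs2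
        by_contra hcs
        push_neg at hcs
        exact absurd (le_csSup hSσbdd (⟨⟨hσt0.trans hs1.le, hs2⟩, hcs⟩ : s ∈ Sσ))
          (not_le.mpr hs1)
      have hσlt : σ < tm := by
        rcases lt_or_eq_of_le hσtm with hl | he
        · exact hl
        · exfalso
          rw [he] at hxσ0
          simp only [hmdef] at hmpos
          linarith
      have hxσeq : x σ = 0 := by
        refine le_antisymm ?_ hxσ0
        have hT : Tendsto x (nhdsWithin σ (Ioi σ)) (nhds (x σ)) :=
          (hx_cont.continuousAt).continuousWithinAt.tendsto
        refine le_of_tendsto hT ?_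
        filter_upwards [Ioc_mem_nhdsGT_of_mem ⟨le_refl σ, hσlt⟩] with s hs
        exact (hneg s hs.1 hs.2).le
      have hxle0 : ∀ u, σ ≤ u → u ≤ tm → x u ≤ 0 := by
        intro u h1 h2
        rcases eq_or_lt_of_le h1 with he | hl
        · rw [← he, hxσeq]
        · exact (hneg u hl h2).le
      have hxgem : ∀ s, t0 ≤ s → s ≤ s₀ → -m ≤ x s := by
        intro s h1 h2
        have h3 := htm_min (⟨h1, h2⟩ : s ∈ Icc t0 s₀)
        simp only [hmdef]
        simpa using h3
      have hHge : ∀ u ∈ Icc σ tm, -(2*a*m) ≤ G u - b * x u := by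
        intro u hu
        have hu0 : 0 ≤ u := (ht0nonneg.trans hσt0).trans hu.1
        have hGl : -(2*a*m) ≤ G u := by
          apply hG_lb u hu0
          intro s hsmem
          have hsle : s ≤ s₀ := hsmem.2.trans (hu.2.trans htm_mem.2)
          rcases le_or_gt s t0 with h1 | h1
          · exact le_trans (by nlinarith) (hq_nonneg (x s) (hhist s h1).1)
          · rcases le_or_gt 0 (x s) with h2 | h2
            · exact le_trans (by nlinarith) (hq_nonneg (x s) h2)
            · have hsx : -m ≤ x s := hxgem s h1.le hsle
              have habs := abs_lt.mp (hclose s ⟨h1.le, hsle⟩)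
              have hmem2 : x s ∈ Icc (-ε₀) (C+1) :=
                ⟨by linarith [hεε₀], by linarith [hεC]⟩
              have hq_eq : q (x s) = a * x s / (1 + x s ^ γ) := hq_eqn (x s) hmem2
              have hd2 : 1/2 ≤ 1 + x s ^ γ := by
                have h6 := hdenom (x s)
                rwa [hproj_eq (x s) hmem2] at h6
              have hd2' : (0:ℝ) < 1 + x s ^ γ := by linarith
              rw [hq_eq, le_div_iff₀ hd2']
              nlinarith [mul_le_mul_of_nonneg_left hsx ha.le,
                mul_le_mul_of_nonneg_left hd2 (by positivity : (0:ℝ) ≤ 2*a*m)]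
        have hbx : b * x u ≤ 0 :=
          mul_nonpos_of_nonneg_of_nonpos hb.le (hxle0 u hu.1 hu.2)
        linarith
      have hdiffeq := hdiff σ tm (ht0nonneg.trans hσt0) hσlt.le
        (fun s hs => hall s (hs.trans htm_mem.2))
      have hmono : ∫ u in σ..tm, (-(2*a*m)) ≤ ∫ u in σ..tm, (G u - b * x u) :=
        intervalIntegral.integral_mono_on hσlt.le intervalIntegrable_const
          (hHint σ tm (ht0nonneg.trans hσt0) hσlt.le) hHge
      rw [intervalIntegral.integral_const, smul_eq_mul] at hmono
      have hlen : tm - σ ≤ 1/(4*a+1) := by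
        have h6 := min_le_right η0 (1/(4*a+1))
        linarith [htm_mem.2, hσt0, hs₀lt]
      rw [hxσeq] at hdiffeq
      have hx_tm : x tm = -m := by simp [hmdef]
      rw [hx_tm] at hdiffeq
      have hkey : m ≤ 2*a*m*(tm - σ) := by nlinarith [hmono, hdiffeq]
      have h7 : 2*a*m*(tm-σ) ≤ 2*a*m*(1/(4*a+1)) :=
        mul_le_mul_of_nonneg_left hlen (by positivity)
      have h8 : 2*a*m*(1/(4*a+1)) < m := by
        rw [mul_one_div, div_lt_iff₀ (by positivity : (0:ℝ) < 4*a+1)]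
        nlinarith [mul_pos ha hmpos]
      exact lt_irrefl m (lt_of_le_of_lt (hkey.trans h7) h8)
    · -- Case A : 0 < x t0 < C
      set ε := min (x t0) (C - x t0) with hεdef
      have hεpos : 0 < ε := lt_min hxpos (by linarith)
      obtain ⟨η0, hη0pos, hη0⟩ := Metric.continuousAt_iff.mp hx_cont.continuousAt ε hεpos
      obtain ⟨s₀, hs₀bad, hs₀gt, hs₀lt⟩ := hfreq η0 hη0pos
      have hd : dist s₀ t0 < η0 := by
        rw [Real.dist_eq, abs_of_nonneg (by linarith)]
        linarith
      have := abs_lt.mp (by rw [← Real.dist_eq]; exact hη0 hd)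
      refine hs₀bad ⟨?_, ?_⟩
      · linarith [min_le_left (x t0) (C - x t0)]
      · linarith [min_le_right (x t0) (C - x t0)]
  -- Phase 2: extinction
  have hlow : ∀ u, 0 ≤ x u := fun u => (hinv u).1
  have hup : ∀ u, x u ≤ C := fun u => (hinv u).2
  have hallr : ∀ s : ℝ, x s ∈ Icc (-ε₀) (C+1) :=
    fun s => ⟨by linarith [hlow s, hε₀pos], by linarith [hup s]⟩
  have heq2 : ∀ t₁ t₂ : ℝ, 0 ≤ t₁ → t₁ ≤ t₂ →
      x t₂ - x t₁ = ∫ u in t₁..t₂, (G u - b * x u) :=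
    fun t₁ t₂ h1 h2 => hdiff t₁ t₂ h1 h2 (fun s _ => hallr s)
  have hbd_above : IsBoundedUnder (· ≤ ·) atTop x := isBoundedUnder_of ⟨C, hup⟩
  have hbd_below : IsBoundedUnder (· ≥ ·) atTop x := isBoundedUnder_of ⟨0, hlow⟩
  set L := limsup x atTop with hLdef
  have hLle : ∀ c : ℝ, (∀ᶠ t in atTop, x t ≤ c) → L ≤ c := fun c hc =>
    limsup_le_of_le hbd_below.isCoboundedUnder_le hc
  have hmain : L ≤ 0 := by
    by_contra hL
    push_neg at hL
    obtain ⟨ψL, hψL0, hψLL, hψLub⟩ := psi_exists γ L hγ hL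
    have hkey : ∀ ε : ℝ, 0 < ε → L ≤ ψL + 2*ε := by
      intro ε hε
      have hev : ∀ᶠ s in atTop, x s < L + ε :=
        eventually_lt_of_limsup_lt (by linarith) hbd_above
      obtain ⟨T, hT⟩ := eventually_atTop.mp hev
      obtain ⟨T', hT'⟩ := eventually_atTop.mp (hh_tend.eventually_ge_atTop T)
      set τ := max T' 0 with hτdef
      have hτ0 : (0:ℝ) ≤ τ := le_max_right _ _
      set c' := ψL + 2*ε with hc'def
      have hψ' := psi_shift γ L ψL ε hγ hL hε.le hψLub
      have hHub : ∀ u : ℝ, τ ≤ u → c' ≤ x u → G u - b * x u ≤ -(b*ε) := by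
        intro u hu hcx
        have hu0 : 0 ≤ u := hτ0.trans hu
        have hGu : G u ≤ a * (ψL + ε) := by
          apply hG_ub u hu0
          intro s hsmem
          have hsT : T ≤ s := le_trans (hT' u (le_trans (le_max_left _ _) hu)) hsmem.1
          have hxs : x s ∈ Icc 0 (L + ε) := ⟨hlow s, (hT s hsT).le⟩
          have hq_eq : q (x s) = a * x s / (1 + x s ^ γ) := hq_eqn (x s) (hallr s)
          rw [hq_eq, mul_div_assoc]
          exact mul_le_mul_of_nonneg_left (hψ' (x s) hxs) ha.le
        have h10 : b * c' ≤ b * x u := mul_le_mul_of_nonneg_left hcx hb.le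
        have h9 : a * (ψL + ε) ≤ b * (ψL + ε) :=
          mul_le_mul_of_nonneg_right hab (by linarith)
        simp only [hc'def] at h10
        nlinarith
      obtain ⟨τ', hττ', hxτ'⟩ := comes_down x (fun u => G u - b * x u) τ c' (b*ε) C
        (by positivity)
        (fun t₂ ht₂ => heq2 τ t₂ hτ0 ht₂)
        (fun t₂ ht₂ => hHint τ t₂ hτ0 ht₂)
        hHub hlow (hup τ)
      have hstay : ∀ t, τ' ≤ t → x t ≤ c' := by
        intro t ht
        refine no_up_cross x (fun u => G u - b * x u) τ' t c' hx_cont ht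
          (fun t₁ h1 h2 => heq2 t₁ t (hτ0.trans (hττ'.trans h1)) h2)
          (fun u hu1 hu2 hcx => le_trans (hHub u (hττ'.trans hu1) hcx) (by nlinarith))
          hxτ'
      have hev2 : ∀ᶠ t in atTop, x t ≤ c' := eventually_atTop.mpr ⟨τ', hstay⟩
      exact hLle c' hev2
    have hLψ : L ≤ ψL := by
      refine le_of_forall_pos_le_add ?_
      intro ε hε
      have := hkey (ε/2) (by positivity)
      linarith
    linarith
  have hliminf : (0:ℝ) ≤ liminf x atTop :=
    le_liminf_of_le hbd_above.isCoboundedUnder_ge (Eventually.of_forall hlow)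
  have hls : liminf x atTop ≤ L := liminf_le_limsup hbd_above hbd_below
  have hL0 : L = 0 := le_antisymm hmain (hliminf.trans hls)
  have hl0 : liminf x atTop = 0 := le_antisymm (hls.trans hmain) hliminf
  exact tendsto_of_liminf_eq_limsup hl0 hL0 hbd_above hbd_below
end
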